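/- arXiv:2410.07359 — 2 statements merged into one kernel-verified Lean document; each statement's English description precedes it below -/
import Mathlib

section
/- For a finite MDP with target set F and reachability values, if a (possibly history-dependent) policy achieves probability ≥ p of reaching F from some state, then there exists a stationary (memoryless) deterministic policy achieving probability ≥ p of reaching F from that state; equivalently, the supremum of reachability probabilities over all policies is attained by a stationary deterministic policy. -/
open Finset

/-- Probability of hitting the absorbing target `F` within `k` steps under a
stationary deterministic policy `σ` in a finite MDP with kernel `P`. -/
noncomputable def sreach {S A : Type*} [Fintype S] (F : Set S) [DecidablePred (· ∈ F)]
    (P : S → A → S → ℝ) (σ : S → A) : ℕ → S → ℝ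
  | 0 => fun s => if s ∈ F then 1 else 0
  | k + 1 => fun s => if s ∈ F then 1 else ∑ s', P s (σ s) s' * sreach F P σ k s'

/-- Probability of hitting the absorbing target `F` within `k` steps under a
history-dependent policy `π : List S → A`, given the history `h` so far. -/
noncomputable def hreach {S A : Type*} [Fintype S] (F : Set S) [DecidablePred (· ∈ F)]
    (P : S → A → S → ℝ) (π : List S → A) : ℕ → List S → S → ℝ
  | 0, _, s => if s ∈ F then 1 else 0
  | k + 1, h, s => if s ∈ F then 1 else
      ∑ s', P s (π (h ++ [s])) s' * hreach F P π k (h ++ [s]) s'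

set_option linter.unusedSectionVars false

namespace MDPProof

open Filter
open scoped Classical

variable {S A : Type*} [Fintype S] [Fintype A] [Nonempty A]
variable (F : Set S) [DecidablePred (· ∈ F)] (P : S → A → S → ℝ)

/-- shorthand for being a proper kernel -/
def Kernel (P : S → A → S → ℝ) : Prop :=
  ∀ s a, (∀ s', 0 ≤ P s a s') ∧ ∑ s', P s a s' = 1

lemma step_nonneg (hP : Kernel P)
    {x : S → ℝ} (hx : ∀ s', 0 ≤ x s') (s : S) (a : A) :
    0 ≤ ∑ s', P s a s' * x s' :=
  Finset.sum_nonneg fun s' _ => mul_nonneg ((hP s a).1 s') (hx s')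

lemma step_le_one (hP : Kernel P)
    {x : S → ℝ} (hx1 : ∀ s', x s' ≤ 1) (s : S) (a : A) :
    ∑ s', P s a s' * x s' ≤ 1 := by
  calc ∑ s', P s a s' * x s' ≤ ∑ s', P s a s' * 1 :=
        Finset.sum_le_sum fun s' _ => mul_le_mul_of_nonneg_left (hx1 s') ((hP s a).1 s')
    _ = 1 := by simpa using (hP s a).2

lemma step_mono (hP : Kernel P)
    {x y : S → ℝ} (hxy : ∀ s', x s' ≤ y s') (s : S) (a : A) :
    ∑ s', P s a s' * x s' ≤ ∑ s', P s a s' * y s' :=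
  Finset.sum_le_sum fun s' _ => mul_le_mul_of_nonneg_left (hxy s') ((hP s a).1 s')

lemma sreach_nonneg (σ : S → A) (hP : Kernel P) : ∀ k s, 0 ≤ sreach F P σ k s
  | 0, s => by by_cases h : s ∈ F <;> simp [sreach, h]
  | k+1, s => by
      by_cases h : s ∈ F
      · simp [sreach, h]
      · simp only [sreach, h, if_false]
        exact step_nonneg P hP (sreach_nonneg σ hP k) s (σ s)

lemma sreach_le_one (σ : S → A) (hP : Kernel P) : ∀ k s, sreach F P σ k s ≤ 1
  | 0, s => by by_cases h : s ∈ F <;> simp [sreach, h]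
  | k+1, s => by
      by_cases h : s ∈ F
      · simp [sreach, h]
      · simp only [sreach, h, if_false]
        exact step_le_one P hP (sreach_le_one σ hP k) s (σ s)

lemma sreach_succ_le (σ : S → A) (hP : Kernel P) :
    ∀ k s, sreach F P σ k s ≤ sreach F P σ (k+1) s
  | 0, s => by
      by_cases h : s ∈ F
      · simp [sreach, h]
      · simp only [sreach, h, if_false]
        exact step_nonneg P hP (sreach_nonneg F P σ hP 0) s (σ s)
  | k+1, s => by
      by_cases h : s ∈ F
      · simp [sreach, h]
      · simp only [sreach, h, if_false]
        exact step_mono P hP (sreach_succ_le σ hP k) s (σ s)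

lemma sreach_mono (σ : S → A) (hP : Kernel P) (s : S) :
    Monotone fun k => sreach F P σ k s :=
  monotone_nat_of_le_succ fun k => sreach_succ_le F P σ hP k s

lemma sreach_bdd (σ : S → A) (hP : Kernel P) (s : S) :
    BddAbove (Set.range fun k => sreach F P σ k s) :=
  ⟨1, by rintro _ ⟨k, rfl⟩; exact sreach_le_one F P σ hP k s⟩

lemma sreach_mem_F (σ : S → A) (k : ℕ) {s : S} (hs : s ∈ F) : sreach F P σ k s = 1 := by
  cases k <;> simp [sreach, hs]

lemma hreach_nonneg (π : List S → A) (hP : Kernel P) : ∀ k h s, 0 ≤ hreach F P π k h s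
  | 0, h, s => by by_cases hs : s ∈ F <;> simp [hreach, hs]
  | k+1, h, s => by
      by_cases hs : s ∈ F
      · simp [hreach, hs]
      · simp only [hreach, hs, if_false]
        exact step_nonneg P hP (hreach_nonneg π hP k (h ++ [s])) s _

/-- Optimal value iteration. -/
noncomputable def vIter : ℕ → S → ℝ
  | 0 => fun s => if s ∈ F then 1 else 0
  | k+1 => fun s => if s ∈ F then 1 else
      Finset.univ.sup' Finset.univ_nonempty fun a => ∑ s', P s a s' * vIter k s'

lemma vIter_succ_def (k : ℕ) (s : S) :
    vIter F P (k+1) s = if s ∈ F then 1 else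
      Finset.univ.sup' Finset.univ_nonempty fun a => ∑ s', P s a s' * vIter F P k s' := rfl

lemma vIter_nonneg (hP : Kernel P) : ∀ k s, 0 ≤ vIter F P k s
  | 0, s => by by_cases h : s ∈ F <;> simp [vIter, h]
  | k+1, s => by
      by_cases h : s ∈ F
      · simp [vIter, h]
      · rw [vIter_succ_def, if_neg h]
        obtain ⟨a⟩ := (inferInstance : Nonempty A)
        exact le_trans (step_nonneg P hP (vIter_nonneg hP k) s a)
          (Finset.le_sup' (fun a => ∑ s', P s a s' * vIter F P k s') (Finset.mem_univ a))

lemma vIter_le_one (hP : Kernel P) : ∀ k s, vIter F P k s ≤ 1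
  | 0, s => by by_cases h : s ∈ F <;> simp [vIter, h]
  | k+1, s => by
      by_cases h : s ∈ F
      · simp [vIter, h]
      · simp only [vIter, h, if_false]
        exact Finset.sup'_le _ _ fun a _ => step_le_one P hP (vIter_le_one hP k) s a

lemma vIter_succ_le (hP : Kernel P) : ∀ k s, vIter F P k s ≤ vIter F P (k+1) s
  | 0, s => by
      by_cases h : s ∈ F
      · simp [vIter, h]
      · have h0 : vIter F P 0 s = 0 := by simp [vIter, h]
        rw [h0]
        exact vIter_nonneg F P hP 1 s
  | k+1, s => by
      by_cases h : s ∈ F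
      · simp [vIter, h]
      · rw [vIter_succ_def, if_neg h, vIter_succ_def, if_neg h]
        exact Finset.sup'_le _ _ fun a _ =>
          le_trans (step_mono P hP (vIter_succ_le hP k) s a)
            (Finset.le_sup' (fun a => ∑ s', P s a s' * vIter F P (k+1) s') (Finset.mem_univ a))

lemma vIter_mono (hP : Kernel P) (s : S) : Monotone fun k => vIter F P k s :=
  monotone_nat_of_le_succ fun k => vIter_succ_le F P hP k s

lemma vIter_bdd (hP : Kernel P) (s : S) :
    BddAbove (Set.range fun k => vIter F P k s) :=
  ⟨1, by rintro _ ⟨k, rfl⟩; exact vIter_le_one F P hP k s⟩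

lemma hreach_le_vIter (hP : Kernel P) (π : List S → A) :
    ∀ k h s, hreach F P π k h s ≤ vIter F P k s
  | 0, h, s => by by_cases hs : s ∈ F <;> simp [hreach, vIter, hs]
  | k+1, h, s => by
      by_cases hs : s ∈ F
      · simp [hreach, vIter, hs]
      · rw [vIter_succ_def, if_neg hs]
        simp only [hreach, hs, if_false]
        exact le_trans
          (step_mono P hP (hreach_le_vIter hP π k (h ++ [s])) s (π (h ++ [s])))
          (Finset.le_sup' (fun a => ∑ s', P s a s' * vIter F P k s') (Finset.mem_univ (π (h ++ [s]))))

/-- The optimal reachability value. -/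
noncomputable def Vopt (s : S) : ℝ := ⨆ k, vIter F P k s

lemma vIter_le_Vopt (hP : Kernel P) (k : ℕ) (s : S) : vIter F P k s ≤ Vopt F P s :=
  le_ciSup (vIter_bdd F P hP s) k

lemma Vopt_nonneg (hP : Kernel P) (s : S) : 0 ≤ Vopt F P s :=
  le_trans (vIter_nonneg F P hP 0 s) (vIter_le_Vopt F P hP 0 s)

lemma Vopt_le_one (hP : Kernel P) (s : S) : Vopt F P s ≤ 1 :=
  ciSup_le fun k => vIter_le_one F P hP k s

lemma Vopt_mem_F (hP : Kernel P) {s : S} (hs : s ∈ F) : Vopt F P s = 1 := by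
  have : ∀ k, vIter F P k s = 1 := by intro k; cases k <;> simp [vIter, hs]
  simp [Vopt, this]

lemma tendsto_vIter (hP : Kernel P) (s : S) :
    Tendsto (fun k => vIter F P k s) atTop (nhds (Vopt F P s)) :=
  tendsto_atTop_ciSup (vIter_mono F P hP s) (vIter_bdd F P hP s)

/-- finite sup' commutes with limits -/
lemma tendsto_sup' {ι : Type*} (t : Finset ι) (ht : t.Nonempty)
    (f : ι → ℕ → ℝ) (g : ι → ℝ) (hf : ∀ i ∈ t, Tendsto (f i) atTop (nhds (g i))) :
    Tendsto (fun k => t.sup' ht fun i => f i k) atTop (nhds (t.sup' ht g)) := by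
  revert hf
  induction ht using Finset.Nonempty.cons_induction with
  | singleton i => intro hf; simpa using hf i (by simp)
  | cons i t hit htne ih =>
      intro hf
      have e : ∀ (h : ι → ℝ), (Finset.cons i t hit).sup' (Finset.cons_nonempty hit) h
          = max (h i) (t.sup' htne h) := fun h => Finset.sup'_cons htne h
      simp only [e]
      exact Tendsto.max (hf i (by simp)) (ih fun j hj => hf j (by simp [hj]))

lemma tendsto_step (hP : Kernel P) (s : S) (a : A) :
    Tendsto (fun k => ∑ s', P s a s' * vIter F P k s') atTop
      (nhds (∑ s', P s a s' * Vopt F P s')) :=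
  tendsto_finset_sum _ fun s' _ => (tendsto_vIter F P hP s').const_mul _

lemma Vopt_bellman (hP : Kernel P) {s : S} (hs : s ∉ F) :
    Vopt F P s = Finset.univ.sup' Finset.univ_nonempty
      fun a => ∑ s', P s a s' * Vopt F P s' := by
  have h1 : Tendsto (fun k => vIter F P (k+1) s) atTop (nhds (Vopt F P s)) :=
    (tendsto_vIter F P hP s).comp (tendsto_add_atTop_nat 1)
  have h2 : Tendsto (fun k => vIter F P (k+1) s) atTop
      (nhds (Finset.univ.sup' Finset.univ_nonempty
        fun a => ∑ s', P s a s' * Vopt F P s')) := by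
    have := tendsto_sup' (Finset.univ : Finset A) Finset.univ_nonempty
      (fun a k => ∑ s', P s a s' * vIter F P k s')
      (fun a => ∑ s', P s a s' * Vopt F P s')
      (fun a _ => tendsto_step F P hP s a)
    refine this.congr fun k => ?_
    rw [vIter_succ_def, if_neg hs]
  exact tendsto_nhds_unique h1 h2

lemma step_le_Vopt (hP : Kernel P) {s : S} (hs : s ∉ F) (a : A) :
    ∑ s', P s a s' * Vopt F P s' ≤ Vopt F P s := by
  rw [Vopt_bellman F P hP hs]
  exact Finset.le_sup' (fun a => ∑ s', P s a s' * Vopt F P s') (Finset.mem_univ a)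

lemma exists_opt_action (hP : Kernel P) {s : S} (hs : s ∉ F) :
    ∃ a, ∑ s', P s a s' * Vopt F P s' = Vopt F P s := by
  obtain ⟨a, _, ha⟩ := Finset.exists_mem_eq_sup' (Finset.univ_nonempty (α := A))
    (fun a => ∑ s', P s a s' * Vopt F P s')
  exact ⟨a, by rw [← ha, ← Vopt_bellman F P hP hs]⟩

/-- Attractor-style sets: states from which an optimal action can reach `F`
within `n` steps with positive probability. -/
def Dset : ℕ → Set S
  | 0 => F
  | n+1 => Dset n ∪ {s | ∃ a, (∑ s', P s a s' * Vopt F P s' = Vopt F P s) ∧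
      ∃ s', 0 < P s a s' ∧ s' ∈ Dset n}

lemma Dset_subset_succ (n : ℕ) : Dset F P n ⊆ Dset F P (n+1) := Set.subset_union_left

lemma mem_Dset_of_pos (hP : Kernel P) (s₀ : S) (hV0 : 0 < Vopt F P s₀) :
    ∃ n, s₀ ∈ Dset F P n := by
  classical
  by_contra hD0
  push_neg at hD0
  set U : Finset S := Finset.univ.filter
    (fun s => 0 < Vopt F P s ∧ ∀ n, s ∉ Dset F P n) with hU
  have hUne : U.Nonempty := ⟨s₀, by simp [hU, hV0, hD0]⟩
  obtain ⟨sm, hsmU, hmax⟩ := U.exists_max_image (Vopt F P) hUne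
  set m := Vopt F P sm with hm
  have hm0 : 0 < m := ((Finset.mem_filter.mp hsmU).2).1
  set U' : Finset S := U.filter (fun s => Vopt F P s = m) with hU'
  have hsmU' : sm ∈ U' := Finset.mem_filter.mpr ⟨hsmU, rfl⟩
  have hU'mem : ∀ s ∈ U', Vopt F P s = m ∧ ∀ n, s ∉ Dset F P n := by
    intro s hs
    have h1 := Finset.mem_filter.mp hs
    have h2 := (Finset.mem_filter.mp h1.1).2
    exact ⟨h1.2, h2.2⟩
  have hU'F : ∀ s ∈ U', s ∉ F := fun s hs hF => (hU'mem s hs).2 0 hF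
  have hsucc_le : ∀ s', (∀ n, s' ∉ Dset F P n) → Vopt F P s' ≤ m := by
    intro s' hnd
    rcases lt_or_ge 0 (Vopt F P s') with hpos | hle
    · exact hmax s' (Finset.mem_filter.mpr ⟨Finset.mem_univ s', hpos, hnd⟩)
    · exact hle.trans hm0.le
  -- positive-probability successors of optimal actions from U' stay in U'
  have K1 : ∀ s ∈ U', ∀ a, (∑ s', P s a s' * Vopt F P s' = Vopt F P s) →
      ∀ t, 0 < P s a t → t ∈ U' := by
    intro s hs a hopt t hPt
    obtain ⟨hVs, hnD⟩ := hU'mem s hs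
    have hall : ∀ t', 0 < P s a t' → ∀ n, t' ∉ Dset F P n := by
      intro t' hPt' n hn
      exact hnD (n+1) (Or.inr ⟨a, hopt, t', hPt', hn⟩)
    have hterm : ∀ s' ∈ Finset.univ, P s a s' * Vopt F P s' ≤ P s a s' * m := by
      intro s' _
      rcases ((hP s a).1 s').eq_or_lt with hz | hp
      · rw [← hz]; simp
      · exact mul_le_mul_of_nonneg_left (hsucc_le s' (hall s' hp)) hp.le
    have hsum_m : ∑ s', P s a s' * m = m := by
      rw [← Finset.sum_mul, (hP s a).2, one_mul]
    have hVt : Vopt F P t = m := by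
      rcases (hsucc_le t (hall t hPt)).lt_or_eq with hlt | heq
      · exfalso
        have : ∑ s', P s a s' * Vopt F P s' < ∑ s', P s a s' * m :=
          Finset.sum_lt_sum hterm ⟨t, Finset.mem_univ t,
            (mul_lt_mul_iff_right₀ hPt).mpr hlt⟩
        rw [hopt, hVs, hsum_m] at this
        exact lt_irrefl m this
      · exact heq
    refine Finset.mem_filter.mpr ⟨Finset.mem_filter.mpr
      ⟨Finset.mem_univ t, ?_, hall t hPt⟩, hVt⟩
    rw [hVt]; exact hm0
  -- the finitely many suboptimal values are bounded away from m
  set w : S × A → ℝ := fun q => ∑ s', P q.1 q.2 s' * Vopt F P s' with hw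
  set T : Finset (S × A) := (U' ×ˢ Finset.univ).filter
    (fun q => w q ≠ Vopt F P q.1) with hT
  set c : ℝ := (insert (0:ℝ) (T.image w)).max' (Finset.insert_nonempty _ _) with hc
  have hc0 : 0 ≤ c := Finset.le_max' _ _ (Finset.mem_insert_self _ _)
  have hcw : ∀ q ∈ T, w q ≤ c := fun q hq =>
    Finset.le_max' _ _ (Finset.mem_insert_of_mem (Finset.mem_image_of_mem w hq))
  have hcm : c < m := by
    rw [hc]
    apply (Finset.max'_lt_iff _ _).mpr
    intro b hb
    rcases Finset.mem_insert.mp hb with hb0 | hbw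
    · rw [hb0]; exact hm0
    · obtain ⟨q, hqT, hqw⟩ := Finset.mem_image.mp hbw
      obtain ⟨hqmem, hqne⟩ := Finset.mem_filter.mp hqT
      have hq1 : q.1 ∈ U' := (Finset.mem_product.mp hqmem).1
      have := step_le_Vopt F P hP (hU'F q.1 hq1) q.2
      rw [← hqw]
      rcases this.lt_or_eq with h | h
      · rw [(hU'mem q.1 hq1).1] at h; exact h
      · exact absurd h hqne
  -- value iteration stays below c on U'
  have key : ∀ k, ∀ s ∈ U', vIter F P k s ≤ c := by
    intro k
    induction k with
    | zero => intro s hs; simp [vIter, hU'F s hs]; exact hc0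
    | succ k ih =>
        intro s hs
        rw [vIter_succ_def, if_neg (hU'F s hs)]
        apply Finset.sup'_le
        intro a _
        by_cases hopt : ∑ s', P s a s' * Vopt F P s' = Vopt F P s
        · have hterm : ∀ s' ∈ Finset.univ,
              P s a s' * vIter F P k s' ≤ P s a s' * c := by
            intro s' _
            rcases ((hP s a).1 s').eq_or_lt with hz | hp
            · rw [← hz]; simp
            · exact mul_le_mul_of_nonneg_left (ih s' (K1 s hs a hopt s' hp)) hp.le
          calc ∑ s', P s a s' * vIter F P k s' ≤ ∑ s', P s a s' * c :=
                Finset.sum_le_sum hterm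
            _ = c := by rw [← Finset.sum_mul, (hP s a).2, one_mul]
        · have hqT : (s, a) ∈ T := Finset.mem_filter.mpr
            ⟨Finset.mem_product.mpr ⟨hs, Finset.mem_univ a⟩, hopt⟩
          calc ∑ s', P s a s' * vIter F P k s'
              ≤ ∑ s', P s a s' * Vopt F P s' :=
                step_mono P hP (fun s' => vIter_le_Vopt F P hP k s') s a
            _ ≤ c := hcw _ hqT
  have hfin : Vopt F P sm ≤ c := ciSup_le fun k => key k sm hsmU'
  rw [← hm] at hfin
  exact absurd hfin (not_le.mpr hcm)

noncomputable def rankOf (s : S) : ℕ :=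
  if h : ∃ n, s ∈ Dset F P n then Nat.find h else 0

lemma exists_good_action (hP : Kernel P) {s : S} (hsF : s ∉ F)
    (hd : ∃ n, s ∈ Dset F P n) :
    ∃ a, (∑ s', P s a s' * Vopt F P s' = Vopt F P s) ∧
      ∃ t, 0 < P s a t ∧ rankOf F P t < rankOf F P s := by
  have hr : rankOf F P s = Nat.find hd := dif_pos hd
  have hmem : s ∈ Dset F P (Nat.find hd) := Nat.find_spec hd
  have hr0 : Nat.find hd ≠ 0 := by
    intro h0
    rw [h0] at hmem
    exact hsF hmem
  obtain ⟨r', hr'⟩ := Nat.exists_eq_succ_of_ne_zero hr0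
  rw [hr'] at hmem
  have hnot : s ∉ Dset F P r' := Nat.find_min hd (by omega)
  rcases hmem with hmem | ⟨a, hopt, t, hPt, htD⟩
  · exact absurd hmem hnot
  · have htd : ∃ n, t ∈ Dset F P n := ⟨r', htD⟩
    refine ⟨a, hopt, t, hPt, ?_⟩
    have h1 : rankOf F P t ≤ r' := by
      rw [rankOf, dif_pos htd]
      exact Nat.find_le htD
    rw [hr]
    omega

lemma tendsto_sreach (σ : S → A) (hP : Kernel P) (s : S) :
    Tendsto (fun k => sreach F P σ k s) atTop (nhds (⨆ k, sreach F P σ k s)) :=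
  tendsto_atTop_ciSup (sreach_mono F P σ hP s) (sreach_bdd F P σ hP s)

lemma W_fix (σ : S → A) (hP : Kernel P) {s : S} (hs : s ∉ F) :
    (⨆ k, sreach F P σ k s) = ∑ s', P s (σ s) s' * ⨆ k, sreach F P σ k s' := by
  have h1 : Tendsto (fun k => sreach F P σ (k+1) s) atTop
      (nhds (⨆ k, sreach F P σ k s)) :=
    (tendsto_sreach F P σ hP s).comp (tendsto_add_atTop_nat 1)
  have h2 : Tendsto (fun k => sreach F P σ (k+1) s) atTop
      (nhds (∑ s', P s (σ s) s' * ⨆ k, sreach F P σ k s')) := by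
    have := tendsto_finset_sum (Finset.univ : Finset S)
      (fun s' _ => ((tendsto_sreach F P σ hP s').const_mul (P s (σ s) s') :
        Tendsto (fun k => P s (σ s) s' * sreach F P σ k s') atTop
          (nhds (P s (σ s) s' * ⨆ k, sreach F P σ k s'))))
    refine this.congr fun k => ?_
    show _ = sreach F P σ (k+1) s
    simp [sreach, hs]
  exact tendsto_nhds_unique h1 h2

lemma W_on_F (σ : S → A) {s : S} (hs : s ∈ F) : (⨆ k, sreach F P σ k s) = 1 := by
  have : ∀ k, sreach F P σ k s = 1 := fun k => sreach_mem_F F P σ k hs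
  simp [this]

lemma W_nonneg (σ : S → A) (hP : Kernel P) (s : S) :
    0 ≤ ⨆ k, sreach F P σ k s :=
  le_trans (sreach_nonneg F P σ hP 0 s) (le_ciSup (sreach_bdd F P σ hP s) 0)

lemma Vopt_le_W (hP : Kernel P) :
    ∃ σ : S → A, ∀ s, Vopt F P s ≤ ⨆ k, sreach F P σ k s := by
  classical
  have hch : ∀ s, ∃ a : A, (s ∉ F ∧ ∃ n, s ∈ Dset F P n) →
      (∑ s', P s a s' * Vopt F P s' = Vopt F P s) ∧
      ∃ t, 0 < P s a t ∧ rankOf F P t < rankOf F P s := by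
    intro s
    by_cases h : s ∉ F ∧ ∃ n, s ∈ Dset F P n
    · obtain ⟨a, h1, t, h2, h3⟩ := exists_good_action F P hP h.1 h.2
      exact ⟨a, fun _ => ⟨h1, t, h2, h3⟩⟩
    · exact ⟨Classical.arbitrary A, fun hc => absurd hc h⟩
  choose σ hσ using hch
  refine ⟨σ, ?_⟩
  set W : S → ℝ := fun s => ⨆ k, sreach F P σ k s with hWdef
  by_contra hcon
  push_neg at hcon
  obtain ⟨sbad, hbad⟩ := hcon
  have : Nonempty S := ⟨sbad⟩
  obtain ⟨sM, _, hmax⟩ := Finset.univ.exists_max_image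
    (fun s => Vopt F P s - W s) Finset.univ_nonempty
  set β := Vopt F P sM - W sM with hβ
  have hβpos : 0 < β :=
    lt_of_lt_of_le (by linarith) (hmax sbad (Finset.mem_univ _))
  have hT : ∀ s, Vopt F P s - W s = β → (s ∉ F ∧ ∃ n, s ∈ Dset F P n) := by
    intro s hs
    have hWnn : 0 ≤ W s := W_nonneg F P σ hP s
    have hVpos : 0 < Vopt F P s := by linarith
    have hsF : s ∉ F := by
      intro hF
      have e1 : Vopt F P s = 1 := Vopt_mem_F F P hP hF
      have e2 : W s = 1 := W_on_F F P σ hF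
      rw [e1, e2] at hs
      linarith
    exact ⟨hsF, mem_Dset_of_pos F P hP s hVpos⟩
  set Tf : Finset S := Finset.univ.filter (fun s => Vopt F P s - W s = β) with hTf
  have hTne : Tf.Nonempty := ⟨sM, by simp [hTf, hβ]⟩
  obtain ⟨s₀, hs₀T, hs₀min⟩ := Tf.exists_min_image (rankOf F P) hTne
  have hs₀β : Vopt F P s₀ - W s₀ = β := (Finset.mem_filter.mp hs₀T).2
  obtain ⟨hs₀F, hs₀D⟩ := hT s₀ hs₀β
  obtain ⟨hopt, t, hPt, hrk⟩ := hσ s₀ ⟨hs₀F, hs₀D⟩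
  have hWf : W s₀ = ∑ s', P s₀ (σ s₀) s' * W s' := W_fix F P σ hP hs₀F
  have hgfix : Vopt F P s₀ - W s₀
      = ∑ s', P s₀ (σ s₀) s' * (Vopt F P s' - W s') := by
    rw [← hopt, hWf, ← Finset.sum_sub_distrib]
    exact Finset.sum_congr rfl fun s' _ => (mul_sub _ _ _).symm
  have hgle : ∀ s', Vopt F P s' - W s' ≤ β := fun s' => hmax s' (Finset.mem_univ _)
  have hgt : Vopt F P t - W t = β := by
    by_contra hne
    have hlt : Vopt F P t - W t < β := (hgle t).lt_of_ne hne
    have hterm : ∀ s' ∈ Finset.univ,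
        P s₀ (σ s₀) s' * (Vopt F P s' - W s') ≤ P s₀ (σ s₀) s' * β :=
      fun s' _ => mul_le_mul_of_nonneg_left (hgle s') ((hP _ _).1 s')
    have hstrict : ∑ s', P s₀ (σ s₀) s' * (Vopt F P s' - W s')
        < ∑ s', P s₀ (σ s₀) s' * β :=
      Finset.sum_lt_sum hterm ⟨t, Finset.mem_univ t, (mul_lt_mul_iff_right₀ hPt).mpr hlt⟩
    rw [← hgfix, hs₀β, ← Finset.sum_mul, (hP s₀ (σ s₀)).2, one_mul] at hstrict
    exact lt_irrefl β hstrict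
  have htT : t ∈ Tf := Finset.mem_filter.mpr ⟨Finset.mem_univ t, hgt⟩
  exact absurd (hs₀min t htT) (not_le.mpr hrk)

end MDPProof

theorem stationary_policies_suffice_for_reachability
    {S A : Type*} [Fintype S] [Fintype A] [Nonempty A]
    (F : Set S) [DecidablePred (· ∈ F)]
    (P : S → A → S → ℝ)
    (hP : ∀ s a, (∀ s', 0 ≤ P s a s') ∧ ∑ s', P s a s' = 1)
    (habs : ∀ s ∈ F, ∀ a, ∑ s' ∈ Finset.univ.filter (· ∈ F), P s a s' = 1)
    (p : ℝ) (s : S) (π : List S → A)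
    (h : p ≤ ⨆ k, hreach F P π k [] s) :
    ∃ σ : S → A, p ≤ ⨆ k, sreach F P σ k s := by
  have hK : MDPProof.Kernel P := hP
  obtain ⟨σ, hσ⟩ := MDPProof.Vopt_le_W F P hK
  refine ⟨σ, le_trans h (le_trans ?_ (hσ s))⟩
  exact ciSup_le fun k => (MDPProof.hreach_le_vIter F P hK π k [] s).trans
    (MDPProof.vIter_le_Vopt F P hK k s)
end

section
/- Let events G (good regression event, P(G) ≥ ∏_i(1−δ_i)) and suppose on G the true next state lies in box q' whenever the predicted point lies in the shrunk box q̲'(ε). If the predicted point lies in q̲'(ε) with certainty (indicator 1 − 1_{X∖q̲'(ε)}(Post) = 1), then the probability the true next state lies in q' is at least ∏_i(1−δ_i). Conversely, the probability the true next state lies in q' is at most 1 − (1 − 1_{q̄'(ε)}(Post))·∏_i(1−δ_i), i.e., if the expanded prediction set misses q̄'(ε), then the transition probability is at most 1 − ∏_i(1−δ_i). -/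
open MeasureTheory ProbabilityTheory ENNReal

theorem transition_interval_bounds_single_cell
    {Ω : Type*} [MeasurableSpace Ω] (μ : Measure Ω) [IsProbabilityMeasure μ]
    (n : ℕ) (δ : Fin n → ℝ≥0∞) (hδ : ∀ i, δ i ≤ 1)
    (G : Set Ω) (hG : MeasurableSet G) (hPG : ∏ i, (1 - δ i) ≤ μ G)
    (Z : Ω → Fin n → ℝ) (Post : Set (Fin n → ℝ))
    (l u ε : Fin n → ℝ) (hε : ∀ i, 0 ≤ ε i)
    (hclose : ∀ ω ∈ G, ∃ y ∈ Post, ∀ i, |y i - Z ω i| ≤ ε i)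
    (hmeas : MeasurableSet {ω | ∀ i, l i ≤ Z ω i ∧ Z ω i ≤ u i}) :
    ((Post ⊆ {y | ∀ i, l i + ε i ≤ y i ∧ y i ≤ u i - ε i}) →
        ∏ i, (1 - δ i) ≤ μ {ω | ∀ i, l i ≤ Z ω i ∧ Z ω i ≤ u i}) ∧
      ((Post ∩ {y | ∀ i, l i - ε i ≤ y i ∧ y i ≤ u i + ε i} = ∅) →
        μ {ω | ∀ i, l i ≤ Z ω i ∧ Z ω i ≤ u i} ≤ 1 - ∏ i, (1 - δ i)) := by
  constructor
  · intro hsub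
    refine le_trans hPG (μ.mono ?_)
    intro ω hω
    obtain ⟨y, hy, hyd⟩ := hclose ω hω
    have hyb := hsub hy
    intro i
    have h1 := (abs_le.mp (hyd i)).1
    have h2 := (abs_le.mp (hyd i)).2
    have := (hyb i).1
    have := (hyb i).2
    constructor <;> linarith
  · intro hdis
    have hsub : {ω | ∀ i, l i ≤ Z ω i ∧ Z ω i ≤ u i} ⊆ Gᶜ := by
      intro ω hω hωG
      obtain ⟨y, hy, hyd⟩ := hclose ω hωG
      have : y ∈ Post ∩ {y | ∀ i, l i - ε i ≤ y i ∧ y i ≤ u i + ε i} := by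
        refine ⟨hy, fun i => ?_⟩
        have h1 := (abs_le.mp (hyd i)).1
        have h2 := (abs_le.mp (hyd i)).2
        have := (hω i).1
        have := (hω i).2
        constructor <;> linarith
      rw [hdis] at this; exact this
    calc μ {ω | ∀ i, l i ≤ Z ω i ∧ Z ω i ≤ u i} ≤ μ Gᶜ := μ.mono hsub
      _ = 1 - μ G := prob_compl_eq_one_sub hG
      _ ≤ 1 - ∏ i, (1 - δ i) := tsub_le_tsub_left hPG 1
end
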